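/- Let R be a left DM ring for an ideal I. Then R is I-semiregular if and only if the left R-module R is a finitely I-supplemented module. -/

import Mathlib

open Submodule Function LinearMap

universe u v w x y

section Defs

variable (R : Type u) [Ring R]

/-- `I` (a left ideal) is a two-sided ideal. -/
def IsTwoSidedI (I : Ideal R) : Prop := ∀ a b : R, a ∈ I → a * b ∈ I

variable {M : Type v} [AddCommGroup M] [Module R M]

/-- `N` is PSD in the submodule `T` of `M` (taking `T = ⊤` gives "PSD in `M`"):
whenever `N + X = T`, there is a projective direct summand `S` of `T` with `S ≤ N`
and `T = S ⊕ X`. -/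
def PSDIn (T N : Submodule R M) : Prop :=
  ∀ X : Submodule R M, X ≤ T → N ⊔ X = T →
    ∃ S : Submodule R M, Module.Projective R S ∧ S ≤ N ∧ S ⊔ X = T ∧ S ⊓ X = ⊥

/-- `M` is PSD for the ideal `I`: every submodule of `IM` is PSD in `M`. -/
def PSDFor (I : Ideal R) (M : Type v) [AddCommGroup M] [Module R M] : Prop :=
  ∀ N : Submodule R M, N ≤ I • (⊤ : Submodule R M) → PSDIn R ⊤ N

/-- `R` is a left PSD ring for `I`: every finitely generated free left `R`-module is PSD for `I`. -/
def PSDRing (I : Ideal R) : Prop :=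
  ∀ (F : Type u) [AddCommGroup F] [Module R F] [Module.Free R F] [Module.Finite R F],
    PSDFor R I F

/-- `f : P → M` is a projective `I`-cover. -/
def IsProjICover (I : Ideal R) {P : Type w} [AddCommGroup P] [Module R P]
    (f : P →ₗ[R] M) : Prop :=
  Surjective f ∧ Module.Projective R P ∧
    LinearMap.ker f ≤ I • (⊤ : Submodule R P) ∧ PSDIn R ⊤ (LinearMap.ker f)

/-- A projective `I`-cover of `M`. -/
structure ProjICover (I : Ideal R) (M : Type v) [AddCommGroup M] [Module R M] where
  P : Type w
  [addP : AddCommGroup P]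
  [modP : Module R P]
  f : P →ₗ[R] M
  cover : IsProjICover R I f

/-- `R` is `I`-semiregular. -/
def ISemiregular (I : Ideal R) : Prop :=
  ∀ a : R, ∃ P Q : Submodule R R, IsCompl P Q ∧ Module.Projective R P ∧
    P ≤ Submodule.span R {a} ∧ Submodule.span R {a} ⊓ Q ≤ I

/-- `R` is `I`-semiperfect. -/
def ISemiperfect (I : Ideal R) : Prop :=
  ∀ K : Submodule R R, ∃ A B : Submodule R R, IsCompl A B ∧ Module.Projective R A ∧
    A ≤ K ∧ K ⊓ B ≤ I

end Defs




section Defs2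

variable (R : Type u) [Ring R]
variable {M : Type v} [AddCommGroup M] [Module R M]

/-- A submodule `S` is small in the submodule `T` (take `T = ⊤` for "small in `M`"). -/
def SmallIn (T S : Submodule R M) : Prop :=
  ∀ X : Submodule R M, X ≤ T → S ⊔ X = T → X = T

/-- `K` is DM in the submodule `T` of `M`: whenever `K + X = T` there is a direct
summand `S` of `T` with `S ≤ K` and `S + X = T`. -/
def DMIn (T K : Submodule R M) : Prop :=
  ∀ X : Submodule R M, X ≤ T → K ⊔ X = T →
    ∃ S : Submodule R M, S ≤ K ∧ (∃ S' : Submodule R M, S ⊔ S' = T ∧ S ⊓ S' = ⊥) ∧ S ⊔ X = T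

/-- `M` is DM for `I`: every submodule of `IM` is DM in `M`. -/
def DMFor (I : Ideal R) (M : Type v) [AddCommGroup M] [Module R M] : Prop :=
  ∀ K : Submodule R M, K ≤ I • (⊤ : Submodule R M) → DMIn R ⊤ K

/-- `R` is a left DM ring for `I`. -/
def DMRing (I : Ideal R) : Prop :=
  ∀ (F : Type u) [AddCommGroup F] [Module R F] [Module.Free R F] [Module.Finite R F],
    DMFor R I F

/-- `M` is an `I`-supplemented module. -/
def ISupplemented (I : Ideal R) (M : Type v) [AddCommGroup M] [Module R M] : Prop :=
  ∀ X : Submodule R M, ∃ Y : Submodule R M, Module.Projective R Y ∧ X ⊔ Y = ⊤ ∧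
    X ⊓ Y ≤ I • Y ∧ DMIn R Y (X ⊓ Y)

/-- `M` is a finitely `I`-supplemented module. -/
def FinISupplemented (I : Ideal R) (M : Type v) [AddCommGroup M] [Module R M] : Prop :=
  ∀ X : Submodule R M, X.FG → ∃ Y : Submodule R M, Module.Projective R Y ∧ X ⊔ Y = ⊤ ∧
    X ⊓ Y ≤ I • Y ∧ DMIn R Y (X ⊓ Y)

/-- `M` is a supplemented module. -/
def Supplemented (M : Type v) [AddCommGroup M] [Module R M] : Prop :=
  ∀ X : Submodule R M, ∃ Y : Submodule R M, X ⊔ Y = ⊤ ∧ SmallIn R Y (X ⊓ Y)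

/-- `M` is an `I`-semiperfect module. -/
def ISemiperfectMod (I : Ideal R) (M : Type v) [AddCommGroup M] [Module R M] : Prop :=
  ∀ K : Submodule R M, ∃ A B : Submodule R M, IsCompl A B ∧ Module.Projective R A ∧
    A ≤ K ∧ K ⊓ B ≤ I • (⊤ : Submodule R M)

/-- The radical of `M`: the intersection of all maximal submodules. -/
def RadM (M : Type v) [AddCommGroup M] [Module R M] : Submodule R M :=
  sInf {N : Submodule R M | IsCoatom N}

/-- The socle of `M`: the sum of all simple submodules. -/
def SocM (M : Type v) [AddCommGroup M] [Module R M] : Submodule R M :=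
  sSup {N : Submodule R M | IsSimpleModule R N}

/-- `P` is locally projective (lifting version). -/
def LocallyProjective (P : Type w) [AddCommGroup P] [Module R P] : Prop :=
  ∀ (A : Type x) (B : Type y) [AddCommGroup A] [Module R A] [AddCommGroup B] [Module R B]
    (g : A →ₗ[R] B) (f : P →ₗ[R] B), Surjective g →
      ∀ P₀ : Submodule R P, P₀.FG → ∃ h : P →ₗ[R] A, ∀ p ∈ P₀, f p = g (h p)

/-- `P` is locally projective (splitting version). -/
def LocallyProjectiveB (P : Type w) [AddCommGroup P] [Module R P] : Prop :=
  ∀ (N : Type x) [AddCommGroup N] [Module R N] (g : N →ₗ[R] P), Surjective g →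
    ∀ P₀ : Submodule R P, P₀.FG → ∃ h : P →ₗ[R] N, ∀ p ∈ P₀, g (h p) = p


/-- A locally projective `I`-cover of `M`. -/
structure LocProjICover (I : Ideal R) (M : Type v) [AddCommGroup M] [Module R M] where
  P : Type w
  [addP : AddCommGroup P]
  [modP : Module R P]
  f : P →ₗ[R] M
  surj : Surjective f
  locProj : LocallyProjective.{u, w, x, y} R P
  ker_le : LinearMap.ker f ≤ I • (⊤ : Submodule R P)
  psd : PSDIn R ⊤ (LinearMap.ker f)

/-- A locally projective cover of `M`. -/
structure LocProjCover (M : Type v) [AddCommGroup M] [Module R M] where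
  P : Type w
  [addP : AddCommGroup P]
  [modP : Module R P]
  f : P →ₗ[R] M
  surj : Surjective f
  locProj : LocallyProjective.{u, w, x, y} R P
  ker_small : SmallIn R ⊤ (LinearMap.ker f)

/-- A projective cover of `M`. -/
structure ProjCover (M : Type v) [AddCommGroup M] [Module R M] where
  P : Type w
  [addP : AddCommGroup P]
  [modP : Module R P]
  f : P →ₗ[R] M
  surj : Surjective f
  proj : Module.Projective R P
  ker_small : SmallIn R ⊤ (LinearMap.ker f)

/-- `M` is self-projective (quasi-projective). -/
def SelfProjective (M : Type v) [AddCommGroup M] [Module R M] : Prop :=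
  ∀ (K : Submodule R M) (f : M →ₗ[R] M ⧸ K), ∃ h : M →ₗ[R] M, K.mkQ ∘ₗ h = f

/-- A projectivity class of `R`-modules (in a fixed universe). -/
def ProjectivityClass
    (Pc : ∀ (N : Type w) [AddCommGroup N] [Module R N], Prop) : Prop :=
  (∀ (N : Type w) [AddCommGroup N] [Module R N], SelfProjective R N → Pc N) ∧
  (∀ (N P : Type w) [AddCommGroup N] [Module R N] [AddCommGroup P] [Module R P]
      (f : P →ₗ[R] N), Surjective f → Module.Projective R P → Pc (P × N) →
        Module.Projective R N)

/-- `Pc` is closed under direct summands. -/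
def ClosedUnderSummands
    (Pc : ∀ (N : Type w) [AddCommGroup N] [Module R N], Prop) : Prop :=
  ∀ (N P : Type w) [AddCommGroup N] [Module R N] [AddCommGroup P] [Module R P],
    Pc P → ∀ (i : N →ₗ[R] P) (p : P →ₗ[R] N), p ∘ₗ i = LinearMap.id → Pc N

/-- A `Pc`-projective `I`-cover of `M`. -/
structure PProjICover (Pc : ∀ (N : Type w) [AddCommGroup N] [Module R N], Prop)
    (I : Ideal R) (M : Type v) [AddCommGroup M] [Module R M] where
  Q : Type w
  [addQ : AddCommGroup Q]
  [modQ : Module R Q]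
  g : Q →ₗ[R] M
  surj : Surjective g
  memP : Pc Q
  ker_le : LinearMap.ker g ≤ I • (⊤ : Submodule R Q)
  psd : PSDIn R ⊤ (LinearMap.ker g)

end Defs2


section Helpers

variable {R : Type u} [Ring R]

lemma my_one_smul_top {I : Ideal R} {w : R} (hw : w ∈ I) : w ∈ I • (⊤ : Submodule R R) := by
  have := Submodule.smul_mem_smul hw (Submodule.mem_top (x := (1:R)))
  simpa [smul_eq_mul] using this

lemma my_mul_mem (N : Submodule R R) (x : R) {y : R} (hy : y ∈ N) : x * y ∈ N := by
  simpa [smul_eq_mul] using N.smul_mem x hy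

lemma my_exists_idem_pair {P Q : Submodule R R} (h : IsCompl P Q) :
    ∃ p q : R, p ∈ P ∧ q ∈ Q ∧ p + q = 1 ∧
      (∀ w ∈ P, w * p = w ∧ w * q = 0) ∧ (∀ w ∈ Q, w * q = w ∧ w * p = 0) := by
  have h1 : (1 : R) ∈ P ⊔ Q := by rw [h.sup_eq_top]; trivial
  obtain ⟨p, hp, q, hq, hpq⟩ := Submodule.mem_sup.1 h1
  have key : ∀ w : R, w * p + w * q = w := fun w => by rw [← mul_add, hpq, mul_one]
  refine ⟨p, q, hp, hq, hpq, ?_, ?_⟩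
  · intro w hw
    have hwp : w * p ∈ P := my_mul_mem P w hp
    have hwq : w * q ∈ Q := my_mul_mem Q w hq
    have h2 : w * q ∈ P ⊓ Q := ⟨by
      rw [eq_sub_of_add_eq' (key w)]; exact Submodule.sub_mem P hw hwp, hwq⟩
    rw [h.inf_eq_bot] at h2
    have h3 : w * q = 0 := by simpa using h2
    refine ⟨?_, h3⟩
    have := key w; rw [h3, add_zero] at this; exact this
  · intro w hw
    have hwp : w * p ∈ P := my_mul_mem P w hp
    have hwq : w * q ∈ Q := my_mul_mem Q w hq
    have h2 : w * p ∈ P ⊓ Q := ⟨hwp, by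
      rw [eq_sub_of_add_eq (key w)]; exact Submodule.sub_mem Q hw hwq⟩
    rw [h.inf_eq_bot] at h2
    have h3 : w * p = 0 := by simpa using h2
    refine ⟨?_, h3⟩
    have := key w; rw [h3, zero_add] at this; exact this

lemma my_projective_of_isCompl {P Q : Submodule R R} (h : IsCompl P Q) :
    Module.Projective R P := by
  obtain ⟨p, q, hp, hq, hpq, hP, hQ⟩ := my_exists_idem_pair h
  let s : R →ₗ[R] P :=
    { toFun := fun r => ⟨r * p, my_mul_mem P r hp⟩
      map_add' := fun a b => by ext; simp [add_mul]
      map_smul' := fun t a => by ext; simp [smul_eq_mul, mul_assoc] }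
  refine Module.Projective.of_split P.subtype s ?_
  ext w
  exact congrArg Subtype.val (Subtype.ext ((hP w.1 w.2).1) : s w.1 = w)

variable {M : Type v} [AddCommGroup M] [Module R M]

lemma my_projective_of_summand {Y S Z : Submodule R M} (hY : Module.Projective R Y)
    (hSY : S ≤ Y) (hZY : Z ≤ Y) (hsup : S ⊔ Z = Y) (hinf : S ⊓ Z = ⊥) :
    Module.Projective R Z := by
  set S₂ : Submodule R Y := comap Y.subtype S with hS₂
  set Z₂ : Submodule R Y := comap Y.subtype Z with hZ₂
  have hc : IsCompl Z₂ S₂ := by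
    refine IsCompl.of_eq ?_ ?_
    · rw [eq_bot_iff]
      rintro ⟨x, hxY⟩ ⟨hxZ, hxS⟩
      have : x ∈ S ⊓ Z := ⟨hxS, hxZ⟩
      rw [hinf] at this
      exact (Submodule.mem_bot _).2 (Subtype.ext (by simpa using this))
    · rw [eq_top_iff]
      rintro ⟨x, hxY⟩ -
      have hx : x ∈ S ⊔ Z := by rw [hsup]; exact hxY
      obtain ⟨s, hs, z, hz, hszx⟩ := Submodule.mem_sup.1 hx
      have : (⟨x, hxY⟩ : Y) = ⟨z, hZY hz⟩ + ⟨s, hSY hs⟩ := by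
        ext; simp [← hszx]; abel
      rw [this]
      exact Submodule.add_mem _ (Submodule.mem_sup_left (by simpa [hZ₂] using hz))
        (Submodule.mem_sup_right (by simpa [hS₂] using hs))
  let proj : Y →ₗ[R] Z₂ := Z₂.projectionOnto S₂ hc
  let e : Z₂ ≃ₗ[R] Z := Submodule.comapSubtypeEquivOfLe hZY
  refine Module.Projective.of_split (Submodule.inclusion hZY) ((e : Z₂ →ₗ[R] Z) ∘ₗ proj) ?_
  ext v
  have hmem : (Submodule.inclusion hZY v : Y) ∈ Z₂ := by
    simp [hZ₂]
  have h1 : proj (Submodule.inclusion hZY v) = ⟨Submodule.inclusion hZY v, hmem⟩ := by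
    simpa using Submodule.linearProjOfIsCompl_apply_left hc ⟨Submodule.inclusion hZY v, hmem⟩
  simp only [LinearMap.comp_apply, LinearMap.id_apply, LinearEquiv.coe_coe]
  rw [h1]
  rfl

lemma my_semiregular_fg {I : Ideal R} (hI : IsTwoSidedI R I)
    (hsr : ISemiregular R I) (s : Finset R) :
    ∃ P Q : Submodule R R, IsCompl P Q ∧ P ≤ span R (s : Set R) ∧
      span R (s : Set R) ⊓ Q ≤ I := by
  classical
  induction s using Finset.induction_on with
  | empty =>
    refine ⟨⊥, ⊤, isCompl_bot_top, by simp, by simp⟩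
  | @insert a s ha IH =>
    obtain ⟨P₀, Q₀, h₀, hP₀, hQ₀⟩ := IH
    obtain ⟨p₀, m, hp₀, hm, hpm, hfP₀, hfQ₀⟩ := my_exists_idem_pair h₀
    set b := a * m with hb
    obtain ⟨P₁, Q₁, h₁, _, hP₁, hQ₁⟩ := hsr b
    obtain ⟨p₁, q₁, hp₁, hq₁, hpq₁, hfP₁, hfQ₁⟩ := my_exists_idem_pair h₁
    have hbQ₀ : b ∈ Q₀ := my_mul_mem Q₀ a hm
    have hspanb : span R {b} ≤ Q₀ := (span_singleton_le_iff_mem b Q₀).2 hbQ₀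
    have hP₁Q₀ : P₁ ≤ Q₀ := hP₁.trans hspanb
    have hspan : span R (↑(insert a s) : Set R) = span R {a} ⊔ span R (s : Set R) := by
      rw [Finset.coe_insert, Submodule.span_insert]
    have haX : a ∈ span R (↑(insert a s) : Set R) :=
      subset_span (by simp)
    have hBX : span R (s : Set R) ≤ span R (↑(insert a s) : Set R) :=
      span_mono (by intro x hx; simp only [Finset.coe_insert, Set.mem_insert_iff]; tauto)
    have keym : ∀ w : R, w * p₀ + w * m = w := fun w => by rw [← mul_add, hpm, mul_one]
    have keyq : ∀ w : R, w * p₁ + w * q₁ = w := fun w => by rw [← mul_add, hpq₁, mul_one]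
    have hbX : b ∈ span R (↑(insert a s) : Set R) := by
      have h1 : b = a - a * p₀ := eq_sub_of_add_eq' (keym a)
      rw [h1]
      exact sub_mem haX (hBX (hP₀ (my_mul_mem P₀ a hp₀)))
    refine ⟨P₀ ⊔ P₁, Q₀ ⊓ Q₁, IsCompl.of_eq ?_ ?_, ?_, ?_⟩
    · rw [eq_bot_iff]
      rintro w ⟨hwP, hwQ₀, hwQ₁⟩
      obtain ⟨v₀, hv₀, v₁, hv₁, hv⟩ := Submodule.mem_sup.1 hwP
      have hv₀' : v₀ ∈ P₀ ⊓ Q₀ := ⟨hv₀, by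
        have h2 : v₀ = w - v₁ := by rw [← hv]; abel
        rw [h2]; exact sub_mem hwQ₀ (hP₁Q₀ hv₁)⟩
      rw [h₀.inf_eq_bot] at hv₀'
      have hv₀0 : v₀ = 0 := by simpa using hv₀'
      have hwv₁ : w = v₁ := by rw [← hv, hv₀0, zero_add]
      have : w ∈ P₁ ⊓ Q₁ := ⟨hwv₁ ▸ hv₁, hwQ₁⟩
      rw [h₁.inf_eq_bot] at this
      simpa using this
    · rw [eq_top_iff]
      rintro r -
      have h1 : r = r * p₀ + (r * m * p₁ + r * m * q₁) := by
        rw [keyq (r * m), keym r]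
      have m1 : r * p₀ ∈ P₀ ⊔ P₁ := Submodule.mem_sup_left (my_mul_mem P₀ r hp₀)
      have m2 : r * m * p₁ ∈ P₀ ⊔ P₁ := Submodule.mem_sup_right (my_mul_mem P₁ _ hp₁)
      have m3 : r * m * q₁ ∈ Q₀ ⊓ Q₁ := by
        refine ⟨?_, my_mul_mem Q₁ _ hq₁⟩
        have h2 : r * m * q₁ = r * m - r * m * p₁ := eq_sub_of_add_eq' (keyq (r*m))
        rw [h2]
        exact sub_mem (my_mul_mem Q₀ r hm) (hP₁Q₀ (my_mul_mem P₁ _ hp₁))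
      rw [h1]
      exact Submodule.add_mem _ (Submodule.mem_sup_left m1)
        (Submodule.add_mem _ (Submodule.mem_sup_left m2) (Submodule.mem_sup_right m3))
    · exact sup_le (hP₀.trans hBX) (hP₁.trans ((span_singleton_le_iff_mem b _).2 hbX))
    · rintro w ⟨hwX, hwQ₀, hwQ₁⟩
      rw [hspan] at hwX
      obtain ⟨w₁, hw₁, β, hβ, hwsum⟩ := Submodule.mem_sup.1 hwX
      obtain ⟨r, hr⟩ := Submodule.mem_span_singleton.1 hw₁
      have hβm : β * m ∈ I := by
        refine hQ₀ ⟨?_, my_mul_mem Q₀ β hm⟩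
        have h2 : β * m = β - β * p₀ := eq_sub_of_add_eq' (keym β)
        rw [h2]
        exact sub_mem hβ (hP₀ (my_mul_mem P₀ β hp₀))
      have hwm : w = r * b + β * m := by
        have h3 : w * m = w := (hfQ₀ w hwQ₀).1
        have h4 : w₁ * m = r * b := by rw [← hr, smul_eq_mul, hb, mul_assoc]
        rw [← h3, ← hwsum, add_mul, h4]
      have hbq₁ : b * q₁ ∈ I := by
        refine hQ₁ ⟨?_, my_mul_mem Q₁ b hq₁⟩
        have h2 : b * q₁ = b - b * p₁ := eq_sub_of_add_eq' (keyq b)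
        rw [h2]
        exact sub_mem (Submodule.mem_span_singleton_self b) (hP₁ (my_mul_mem P₁ b hp₁))
      have hfin : w = r * (b * q₁) + (β * m) * q₁ := by
        have h3 : w * q₁ = w := (hfQ₁ w hwQ₁).1
        rw [← h3]
        nth_rewrite 1 [hwm]
        rw [add_mul, mul_assoc]
      rw [hfin]
      exact Submodule.add_mem _ (my_mul_mem I r hbq₁) (hI _ q₁ hβm)

end Helpers

theorem stmt18 {R : Type u} [Ring R] (I : Ideal R) (hI : IsTwoSidedI R I)
    (hDM : DMRing R I) :
    ISemiregular R I ↔ FinISupplemented R I R := by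
  constructor
  · -- ISemiregular → FinISupplemented
    intro hsr X hXfg
    obtain ⟨T, rfl⟩ := hXfg
    obtain ⟨P, Q, hc, hPle, hQle⟩ := my_semiregular_fg hI hsr T
    obtain ⟨p, q, hp, hq, hpq, hfP, hfQ⟩ := my_exists_idem_pair hc
    refine ⟨Q, my_projective_of_isCompl hc.symm, ?_, ?_, ?_⟩
    · refine le_antisymm le_top ?_
      rw [← hc.sup_eq_top]
      exact sup_le_sup_right hPle Q
    · intro w hw
      have hwI : w ∈ I := hQle hw
      have h1 : w * q = w := (hfQ w hw.2).1
      rw [← h1, ← smul_eq_mul]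
      exact Submodule.smul_mem_smul hwI hq
    · intro X' hX'le hX'sup
      have hKI : span R (↑T : Set R) ⊓ Q ≤ I • (⊤ : Submodule R R) :=
        fun w hw => my_one_smul_top (hQle hw)
      have hsupT : (span R (↑T : Set R) ⊓ Q) ⊔ (X' ⊔ P) = ⊤ := by
        rw [← sup_assoc, hX'sup, hc.symm.sup_eq_top]
      obtain ⟨S, hSle, ⟨S'', hs1, hs2⟩, hs3⟩ :=
        hDM R (span R (↑T : Set R) ⊓ Q) hKI (X' ⊔ P) le_top hsupT
      have hSQ : S ≤ Q := hSle.trans inf_le_right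
      refine ⟨S, hSle, ⟨S'' ⊓ Q, ?_, ?_⟩, ?_⟩
      · refine le_antisymm (sup_le hSQ inf_le_right) ?_
        intro x hxQ
        have hx : x ∈ S ⊔ S'' := by rw [hs1]; trivial
        obtain ⟨σ, hσ, τ, hτ, hστ⟩ := Submodule.mem_sup.1 hx
        have hτQ : τ ∈ Q := by
          have h5 : τ = x - σ := by rw [← hστ]; abel
          rw [h5]; exact sub_mem hxQ (hSQ hσ)
        exact Submodule.mem_sup.2 ⟨σ, hσ, τ, ⟨hτ, hτQ⟩, hστ⟩
      · rw [eq_bot_iff]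
        rintro x ⟨hx1, hx2, -⟩
        have : x ∈ S ⊓ S'' := ⟨hx1, hx2⟩
        rw [hs2] at this
        exact this
      · refine le_antisymm (sup_le hSQ hX'le) ?_
        intro x hxQ
        have hxT : x ∈ (S ⊔ X') ⊔ P := by
          rw [sup_assoc, hs3]; trivial
        obtain ⟨α, hα, ρ, hρ, happ⟩ := Submodule.mem_sup.1 hxT
        have hαQ : α ∈ Q := by
          rcases Submodule.mem_sup.1 hα with ⟨σ, hσ, τ, hτ, hστ⟩
          rw [← hστ]
          exact Submodule.add_mem _ (hSQ hσ) (hX'le hτ)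
        have hρ0 : ρ ∈ Q ⊓ P := ⟨by
          have h5 : ρ = x - α := by rw [← happ]; abel
          rw [h5]; exact sub_mem hxQ hαQ, hρ⟩
        rw [hc.symm.inf_eq_bot] at hρ0
        have : ρ = 0 := by simpa using hρ0
        rw [← happ, this, add_zero]
        exact hα
  · -- FinISupplemented → ISemiregular
    intro hfin a
    obtain ⟨Y, hYproj, hXY, hXYI, hDMY⟩ := hfin (span R {a}) (Submodule.fg_span_singleton a)
    have h1 : (1 : R) ∈ span R {a} ⊔ Y := by rw [hXY]; trivial
    obtain ⟨x₀, hx₀, y₀, hy₀, hxy⟩ := Submodule.mem_sup.1 h1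
    have hy₀Y : span R {y₀} ≤ Y := (span_singleton_le_iff_mem _ _).2 hy₀
    have claim : (span R {a} ⊓ Y) ⊔ span R {y₀} = Y := by
      refine le_antisymm (sup_le inf_le_right hy₀Y) ?_
      intro y hy
      have key : y * x₀ + y * y₀ = y := by rw [← mul_add, hxy, mul_one]
      have h2 : y * x₀ ∈ span R {a} ⊓ Y := ⟨my_mul_mem _ y hx₀, by
        rw [eq_sub_of_add_eq key]
        exact sub_mem hy (my_mul_mem Y y hy₀)⟩
      have h3 : y = y * x₀ + y * y₀ := key.symm
      rw [h3]
      exact Submodule.add_mem _ (Submodule.mem_sup_left h2)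
        (Submodule.mem_sup_right (Submodule.mem_span_singleton.2 ⟨y, smul_eq_mul _ _⟩))
    obtain ⟨S, hSle, ⟨S', hSS's, hSS'i⟩, hSsup⟩ := hDMY (span R {y₀}) hy₀Y claim
    have hSY : S ≤ Y := hSle.trans inf_le_right
    have hS'Y : S' ≤ Y := by rw [← hSS's]; exact le_sup_right
    have hy₀SS' : y₀ ∈ S ⊔ S' := by rw [hSS's]; exact hy₀
    obtain ⟨s₀, hs₀, u, hu, hsu⟩ := Submodule.mem_sup.1 hy₀SS'
    have hs₀X : s₀ ∈ span R {a} := (hSle hs₀).1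
    set x₁ := x₀ + s₀ with hx₁def
    have hx₁ : x₁ ∈ span R {a} := add_mem hx₀ hs₀X
    have hone : x₁ + u = 1 := by
      rw [hx₁def, add_assoc, hsu, hxy]
    set Z : Submodule R R := span R {u} with hZdef
    have humem : u ∈ Z := Submodule.mem_span_singleton_self u
    have hZS' : Z ≤ S' := (span_singleton_le_iff_mem _ _).2 hu
    have hS'Z : S' = Z := by
      refine le_antisymm ?_ hZS'
      intro v hv
      have hvY : v ∈ S ⊔ span R {y₀} := by rw [hSsup]; exact hS'Y hv
      obtain ⟨σ, hσ, τ, hτ, hστ⟩ := Submodule.mem_sup.1 hvY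
      obtain ⟨r, hr⟩ := Submodule.mem_span_singleton.1 hτ
      have h5 : v - r * u = σ + r * s₀ := by
        rw [← hστ, ← hr, smul_eq_mul, ← hsu, mul_add]
        abel
      have h6 : v - r * u ∈ S := by
        rw [h5]
        exact Submodule.add_mem _ hσ (my_mul_mem S r hs₀)
      have h7 : v - r * u ∈ S' :=
        sub_mem hv (hZS' (Submodule.mem_span_singleton.2 ⟨r, smul_eq_mul _ _⟩))
      have h8 : v - r * u ∈ S ⊓ S' := ⟨h6, h7⟩
      rw [hSS'i] at h8
      have h9 : v = r * u := by
        have := (Submodule.mem_bot R).1 h8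
        have h10 : v - r * u = 0 := this
        rw [sub_eq_zero] at h10
        exact h10
      rw [h9]
      exact Submodule.mem_span_singleton.2 ⟨r, smul_eq_mul _ _⟩
    have hZY : Z ≤ Y := hS'Z ▸ hS'Y
    have hYdecomp : S ⊔ Z = Y := by rw [← hS'Z]; exact hSS's
    have hSZbot : S ⊓ Z = ⊥ := by rw [← hS'Z]; exact hSS'i
    have hXZ : span R {a} ⊓ Z ≤ I • Z := by
      intro w hw
      have hwY : w ∈ I • Y := hXYI ⟨hw.1, hZY hw.2⟩
      rw [← hYdecomp, Submodule.smul_sup] at hwY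
      obtain ⟨p', hp', q', hq', hpq'⟩ := Submodule.mem_sup.1 hwY
      have hp'S : p' ∈ S := Submodule.smul_le_right hp'
      have hq'Z : q' ∈ Z := Submodule.smul_le_right hq'
      have h5 : p' ∈ S ⊓ Z := ⟨hp'S, by
        have h6 : p' = w - q' := by rw [← hpq']; abel
        rw [h6]; exact sub_mem hw.2 hq'Z⟩
      rw [hSZbot] at h5
      have h6 : p' = 0 := by simpa using h5
      have h7 : w = q' := by rw [← hpq', h6, zero_add]
      rw [h7]; exact hq'
    have hZproj : Module.Projective R Z :=
      my_projective_of_summand hYproj hSY hZY hYdecomp hSZbot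
    let f : R →ₗ[R] Z :=
      { toFun := fun r => ⟨r * u, Submodule.mem_span_singleton.2 ⟨r, smul_eq_mul _ _⟩⟩
        map_add' := fun a b => by ext; simp [add_mul]
        map_smul' := fun t r => by ext; simp [smul_eq_mul, mul_assoc] }
    have fsurj : Surjective f := by
      rintro ⟨v, hv⟩
      obtain ⟨r, hr⟩ := Submodule.mem_span_singleton.1 hv
      exact ⟨r, Subtype.ext (by simpa [smul_eq_mul, f] using hr)⟩
    obtain ⟨g, hg⟩ := Module.projective_lifting_property f LinearMap.id fsurj
    set c := g ⟨u, humem⟩ with hcdef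
    have hfg : ∀ v : Z, (g v) * u = (v : R) := by
      intro v
      have := congrArg Subtype.val (congrFun (congrArg (fun h => h.toFun) hg) v)
      simpa [f] using this
    have hcu : c * u = u := hfg ⟨u, humem⟩
    have hsmulu : (c : R) • (⟨u, humem⟩ : Z) = ⟨u, humem⟩ :=
      Subtype.ext (by simpa [smul_eq_mul] using hcu)
    have hcc : c * c = c := by
      have h5 := g.map_smul c ⟨u, humem⟩
      rw [hsmulu, smul_eq_mul] at h5
      rw [← hcdef] at h5
      exact h5.symm
    have hcX : 1 - c ∈ span R {a} := by
      have h10 : (1 - c) * u = 0 := by rw [sub_mul, one_mul, hcu, sub_self]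
      have h9 : (1 - c) * x₁ = 1 - c := by
        have h12 : (1 - c) * x₁ + (1 - c) * u = 1 - c := by
          rw [← mul_add, hone, mul_one]
        rw [h10, add_zero] at h12
        exact h12
      rw [← h9]
      exact my_mul_mem _ _ hx₁
    have hcompl : IsCompl (span R {1 - c}) (span R {c}) := by
      refine IsCompl.of_eq ?_ ?_
      · rw [eq_bot_iff]
        rintro w ⟨hw1, hw2⟩
        obtain ⟨r, hr⟩ := Submodule.mem_span_singleton.1 hw1
        obtain ⟨t, ht⟩ := Submodule.mem_span_singleton.1 hw2
        have h5 : w * c = 0 := by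
          rw [← hr, smul_eq_mul, mul_assoc, sub_mul, one_mul, hcc, sub_self, mul_zero]
        have h6 : w * c = w := by
          rw [← ht, smul_eq_mul, mul_assoc, hcc]
        rw [Submodule.mem_bot, ← h6, h5]
      · rw [eq_top_iff]
        rintro r -
        have h5 : r = r * (1 - c) + r * c := by rw [← mul_add, sub_add_cancel, mul_one]
        rw [h5]
        exact Submodule.add_mem _
          (Submodule.mem_sup_left (Submodule.mem_span_singleton.2 ⟨r, smul_eq_mul _ _⟩))
          (Submodule.mem_sup_right (Submodule.mem_span_singleton.2 ⟨r, smul_eq_mul _ _⟩))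
    refine ⟨span R {1 - c}, span R {c}, hcompl, my_projective_of_isCompl hcompl,
      (span_singleton_le_iff_mem _ _).2 hcX, ?_⟩
    rintro w ⟨hwX, hwQ⟩
    obtain ⟨t, ht⟩ := Submodule.mem_span_singleton.1 hwQ
    have hwc : w * c = w := by rw [← ht, smul_eq_mul, mul_assoc, hcc]
    have hwuZ : w * u ∈ Z := Submodule.mem_span_singleton.2 ⟨w, smul_eq_mul _ _⟩
    have hwuX : w * u ∈ span R {a} := by
      have h5 : w * u = w - w * x₁ := by
        have h6 : w * (x₁ + u) = w := by rw [hone, mul_one]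
        rw [mul_add] at h6
        rw [eq_sub_of_add_eq' h6]
      rw [h5]
      exact sub_mem hwX (my_mul_mem _ w hx₁)
    have hwuI : w * u ∈ I • Z := hXZ ⟨hwuX, hwuZ⟩
    have keyg : ∀ z : R, z ∈ I • Z → ∃ hz : z ∈ Z, g ⟨z, hz⟩ ∈ I := by
      intro z hz
      refine Submodule.smul_induction_on hz ?_ ?_
      · intro r hr n hn
        have hmem : r • n ∈ Z := Z.smul_mem r hn
        refine ⟨hmem, ?_⟩
        have h5 : (⟨r • n, hmem⟩ : Z) = r • ⟨n, hn⟩ := rfl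
        rw [h5, g.map_smul, smul_eq_mul]
        exact hI r (g ⟨n, hn⟩) hr
      · rintro x y ⟨hxZ, hgx⟩ ⟨hyZ, hgy⟩
        have hmem : x + y ∈ Z := Submodule.add_mem Z hxZ hyZ
        refine ⟨hmem, ?_⟩
        have h5 : (⟨x + y, hmem⟩ : Z) = ⟨x, hxZ⟩ + ⟨y, hyZ⟩ := rfl
        rw [h5, g.map_add]
        exact Submodule.add_mem I hgx hgy
    obtain ⟨hz, hgI⟩ := keyg (w * u) hwuI
    have h5 : (⟨w * u, hz⟩ : Z) = w • ⟨u, humem⟩ := Subtype.ext (by simp [smul_eq_mul])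
    have h6 : g ⟨w * u, hz⟩ = w := by
      rw [h5, g.map_smul, ← hcdef, smul_eq_mul, hwc]
    rw [← h6]
    exact hgI
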